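/- For every real 3×3 matrix B with positive determinant, |cof B|² / det B ≥ 2|B| − 2·max{1, det B}. -/

import Mathlib

open Matrix

noncomputable def frob (A : Matrix (Fin 3) (Fin 3) ℝ) : ℝ :=
  Real.sqrt (∑ i, ∑ j, A i j ^ 2)

noncomputable def cof (A : Matrix (Fin 3) (Fin 3) ℝ) : Matrix (Fin 3) (Fin 3) ℝ :=
  (Matrix.adjugate A).transpose

lemma poly_max (x y z : ℝ) (hx : 0 ≤ x) (hy : 0 ≤ y) (hz : 0 ≤ z)
    (hxy : y ≤ x) (hxz : z ≤ x) :
    4*(x*y*z)*(x+y+z) ≤ (x*y+y*z+z*x + x*y*z)^2 + x*y*z := by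
  have h1 := sq_nonneg (y*(x-z) - z*(x-y))
  have h2 := sq_nonneg (x*(y-z))
  have h3 : 0 ≤ (x*y*z)*(y*z) := by positivity
  have h4 : 0 ≤ (x*y*z)*(2*x-1)^2 := by positivity
  rcases le_total x 1 with hc | hc
  · have h5 : 0 ≤ (x*y*z)*(1-x)*((x-y)+(x-z)) := by
      have : 0 ≤ (x-y)+(x-z) := by linarith
      have : 0 ≤ (1-x) := by linarith
      positivity
    nlinarith [sq_nonneg (x*y*z), sq_nonneg (y*z)]
  · have h5 : 0 ≤ (x*y*z)*(x-1)*(y+z) := by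
      have : 0 ≤ x - 1 := by linarith
      positivity
    nlinarith [sq_nonneg (x*y*z), sq_nonneg (y*z)]

lemma poly_ineq (x y z : ℝ) (hx : 0 ≤ x) (hy : 0 ≤ y) (hz : 0 ≤ z) :
    4*(x*y*z)*(x+y+z) ≤ (x*y+y*z+z*x + x*y*z)^2 + x*y*z := by
  rcases le_total x y with h1 | h1
  · rcases le_total y z with h2 | h2
    · have := poly_max z x y hz hx hy (h1.trans h2) h2; nlinarith [this]
    · have := poly_max y x z hy hx hz h1 h2; nlinarith [this]
  · rcases le_total x z with h2 | h2
    · have := poly_max z x y hz hx hy h2 (h1.trans h2); nlinarith [this]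
    · have := poly_max x y z hx hy hz h1 h2; exact this

lemma key_ineq (x y z d : ℝ) (hx : 0 ≤ x) (hy : 0 ≤ y) (hz : 0 ≤ z) (hd : 0 < d)
    (hd2 : d^2 = x*y*z) :
    2 * d * Real.sqrt (x+y+z) ≤ (x*y+y*z+z*x) + d + d^2 := by
  have he2 : 0 ≤ x*y+y*z+z*x := by positivity
  have hR : 0 ≤ (x*y+y*z+z*x) + d + d^2 := by positivity
  have h1 : 2 * d * Real.sqrt (x+y+z) = Real.sqrt (4*d^2*(x+y+z)) := by
    rw [show (4:ℝ)*d^2*(x+y+z) = (2*d)^2 * (x+y+z) by ring, Real.sqrt_mul (by positivity),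
      Real.sqrt_sq (by positivity)]
  rw [h1]
  have h2 : 4*d^2*(x+y+z) ≤ ((x*y+y*z+z*x) + d + d^2)^2 := by
    have hp := poly_ineq x y z hx hy hz
    nlinarith [mul_nonneg hd.le he2, hd.le, sq_nonneg d]
  calc Real.sqrt (4*d^2*(x+y+z)) ≤ Real.sqrt (((x*y+y*z+z*x) + d + d^2)^2) :=
        Real.sqrt_le_sqrt h2
    _ = (x*y+y*z+z*x) + d + d^2 := Real.sqrt_sq hR

lemma frob_sq_eq (B : Matrix (Fin 3) (Fin 3) ℝ) : frob B ^ 2 = (Bᵀ * B).trace := by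
  rw [frob, Real.sq_sqrt (by positivity)]
  rw [Matrix.trace]
  simp only [Matrix.diag, Matrix.mul_apply, Matrix.transpose_apply]
  rw [Finset.sum_comm]
  refine Finset.sum_congr rfl fun j _ => Finset.sum_congr rfl fun i _ => ?_
  ring

lemma frob_cof_sq_eq (B : Matrix (Fin 3) (Fin 3) ℝ) :
    frob (cof B) ^ 2 = (adjugate (Bᵀ * B)).trace := by
  rw [frob, Real.sq_sqrt (by positivity)]
  rw [show adjugate (Bᵀ * B) = adjugate B * adjugate Bᵀ from Matrix.adjugate_mul_distrib _ _]
  rw [Matrix.trace]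
  simp only [Matrix.diag, Matrix.mul_apply, cof, Matrix.transpose_apply,
    ← Matrix.adjugate_transpose]
  rw [Finset.sum_comm]
  refine Finset.sum_congr rfl fun i _ => Finset.sum_congr rfl fun j _ => ?_
  ring

theorem frob_cof_sq_div_det_ge (B : Matrix (Fin 3) (Fin 3) ℝ) (hB : 0 < B.det) :
    frob (cof B) ^ 2 / B.det ≥ 2 * frob B - 2 * max 1 B.det := by
  have hconj : Bᴴ = Bᵀ := conjTranspose_eq_transpose_of_trivial B
  have hH : (Bᵀ * B).IsHermitian := by
    have := isHermitian_conjTranspose_mul_self B; rwa [hconj] at this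
  have hPSD : (Bᵀ * B).PosSemidef := by
    have := posSemidef_conjTranspose_mul_self B; rwa [hconj] at this
  set lam : Fin 3 → ℝ := hH.eigenvalues with hlam
  have hnn : ∀ i, 0 ≤ lam i := hPSD.eigenvalues_nonneg
  set U : Matrix (Fin 3) (Fin 3) ℝ := (hH.eigenvectorUnitary : Matrix (Fin 3) (Fin 3) ℝ) with hU
  have hU1 : star U * U = 1 := by
    exact (Matrix.mem_unitaryGroup_iff').mp (hH.eigenvectorUnitary).2
  have hspec : Bᵀ * B = U * diagonal lam * star U := by
    have := hH.spectral_theorem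
    simpa using this
  -- trace = sum of eigenvalues
  have htr : (Bᵀ * B).trace = lam 0 + lam 1 + lam 2 := by
    rw [hspec, Matrix.trace_mul_cycle, hU1, Matrix.one_mul,
      Matrix.trace_diagonal, Fin.sum_univ_three]
  -- trace of adjugate = e2 of eigenvalues
  have hadj : (adjugate (Bᵀ * B)).trace
      = lam 0 * lam 1 + lam 1 * lam 2 + lam 2 * lam 0 := by
    rw [hspec, Matrix.adjugate_mul_distrib, Matrix.adjugate_mul_distrib,
      ← Matrix.mul_assoc, Matrix.trace_mul_cycle]
    rw [show adjugate U * adjugate (star U) = 1 by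
      rw [← Matrix.adjugate_mul_distrib, hU1, Matrix.adjugate_one]]
    rw [Matrix.one_mul, Matrix.adjugate_diagonal, Matrix.trace_diagonal, Fin.sum_univ_three]
    norm_num [show (Finset.univ.erase (0 : Fin 3)) = {1, 2} from rfl,
      show (Finset.univ.erase (1 : Fin 3)) = {0, 2} from rfl,
      show (Finset.univ.erase (2 : Fin 3)) = {0, 1} from rfl]
    rw [Finset.prod_pair (by decide), Finset.prod_pair (by decide)]
    ring
  -- det = product of eigenvalues
  have hdet : B.det ^ 2 = lam 0 * lam 1 * lam 2 := by
    have h := hH.det_eq_prod_eigenvalues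
    have : (Bᵀ * B).det = lam 0 * lam 1 * lam 2 := by
      simpa [Fin.prod_univ_three, mul_assoc] using h
    rw [← this, Matrix.det_mul, Matrix.det_transpose]; ring
  have hfB : frob B ^ 2 = (Bᵀ * B).trace := frob_sq_eq B
  have hfC : frob (cof B) ^ 2 = (adjugate (Bᵀ * B)).trace := frob_cof_sq_eq B
  -- assemble
  set d := B.det with hd
  have key := key_ineq (lam 0) (lam 1) (lam 2) d (hnn 0) (hnn 1) (hnn 2) hB hdet
  have hmax : 1 + d ≤ 2 * max 1 d := by
    have h1 : (1:ℝ) ≤ max 1 d := le_max_left _ _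
    have h2 : d ≤ max 1 d := le_max_right _ _
    linarith
  have hsqrt : frob B = Real.sqrt (lam 0 + lam 1 + lam 2) := by
    rw [← htr, ← hfB]
    have h0 : 0 ≤ frob B := by rw [frob]; exact Real.sqrt_nonneg _
    exact (Real.sqrt_sq h0).symm
  have hmd : (1 + d) * d ≤ 2 * max 1 d * d :=
    mul_le_mul_of_nonneg_right hmax hB.le
  have h6 : 2 * Real.sqrt (lam 0 + lam 1 + lam 2) - 2 * max 1 d
      ≤ (lam 0 * lam 1 + lam 1 * lam 2 + lam 2 * lam 0) / d := by
    rw [div_eq_mul_inv]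
    have : (2 * Real.sqrt (lam 0 + lam 1 + lam 2) - 2 * max 1 d) * d
        ≤ lam 0 * lam 1 + lam 1 * lam 2 + lam 2 * lam 0 := by nlinarith [key, hmd]
    calc 2 * Real.sqrt (lam 0 + lam 1 + lam 2) - 2 * max 1 d
        = (2 * Real.sqrt (lam 0 + lam 1 + lam 2) - 2 * max 1 d) * d * d⁻¹ := by
          field_simp
      _ ≤ (lam 0 * lam 1 + lam 1 * lam 2 + lam 2 * lam 0) * d⁻¹ := by
          apply mul_le_mul_of_nonneg_right this (by positivity)
  rw [ge_iff_le, hsqrt, hfC, hadj, div_eq_mul_inv]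
  rw [div_eq_mul_inv] at h6
  linarith
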